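/- (Blaschke selection theorem.) Let X be a proper metric space and let {C_m} be a sequence of nonempty compact subsets of X that is bounded, i.e. all C_m are contained in a single closed ball. Then there exist a subsequence {C_{m_k}} and a nonempty compact set C ⊆ X such that Metric.hausdorffDist C_{m_k} C → 0. -/
import Mathlib

open Metric TopologicalSpace Set

/-- Blaschke selection theorem: a uniformly bounded sequence of
nonempty compact subsets of a proper metric space has a subsequence converging
in the Hausdorff distance to a nonempty compact set. -/
theorem stmt_2 {X : Type*} [MetricSpace X] [ProperSpace X]
    (C : ℕ → Set X) (hCne : ∀ m, (C m).Nonempty) (hCcp : ∀ m, IsCompact (C m))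
    (hbdd : ∃ z r, ∀ m, C m ⊆ Metric.closedBall z r) :
    ∃ φ : ℕ → ℕ, StrictMono φ ∧ ∃ D : Set X, D.Nonempty ∧ IsCompact D ∧
      Filter.Tendsto (fun k => Metric.hausdorffDist (C (φ k)) D)
        Filter.atTop (nhds 0) := by
  obtain ⟨z, r, hz⟩ := hbdd
  set B : Set X := Metric.closedBall z r with hB
  have hBcp : IsCompact B := isCompact_closedBall z r
  haveI : CompactSpace B := isCompact_iff_compactSpace.1 hBcp
  have hsub : ∀ m, C m ⊆ B := hz
  -- lift each C m to a nonempty compact of the subtype B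
  have hval : Isometry ((↑) : B → X) := isometry_subtype_coe
  have hpre : ∀ m, (Subtype.val '' (Subtype.val ⁻¹' C m : Set B)) = C m := by
    intro m
    rw [Subtype.image_preimage_coe]
    exact Set.inter_eq_right.2 (hsub m)
  have hKcp : ∀ m, IsCompact (Subtype.val ⁻¹' C m : Set B) := by
    intro m
    apply IsCompact.of_isClosed_subset isCompact_univ
    · exact ((hCcp m).isClosed).preimage continuous_subtype_val
    · exact Set.subset_univ _
  have hKne : ∀ m, (Subtype.val ⁻¹' C m : Set B).Nonempty := by
    intro m
    obtain ⟨x, hx⟩ := hCne m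
    exact ⟨⟨x, hsub m hx⟩, hx⟩
  set K : ℕ → NonemptyCompacts B := fun m => ⟨⟨_, hKcp m⟩, hKne m⟩ with hK
  obtain ⟨L, -, φ, hφ, hconv⟩ := IsCompact.tendsto_subseq (x := K) isCompact_univ
    (fun n => Set.mem_univ _)
  refine ⟨φ, hφ, Subtype.val '' (L : Set B), ?_, ?_, ?_⟩
  · obtain ⟨x, hx⟩ := L.nonempty
    exact ⟨x, x, hx, rfl⟩
  · exact L.isCompact.image continuous_subtype_val
  · have hdist : Filter.Tendsto (fun k => dist (K (φ k)) L) Filter.atTop (nhds 0) :=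
      (tendsto_iff_dist_tendsto_zero).1 hconv
    convert hdist using 2 with k
    rw [NonemptyCompacts.dist_eq, ← hausdorffDist_image hval]
    congr 1
    exact (hpre _).symm
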